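/- For ρ ∈ [0, 1/2], the maximum of ∫_{[0,1]^2} max(u_1, u_2) dC(u) over all copulas C with d_c(M, C) ≤ ρ equals (1+ρ)/2, where M is the comonotone copula and c(u,v)=|u_1-v_1|+|u_2-v_2|. For ρ > 1/2 the maximum equals 3/4. -/

import Mathlib

open MeasureTheory Set
open scoped ENNReal

/-- The uniform distribution on `[0,1]`. -/
noncomputable def unif : Measure ℝ := volume.restrict (Set.Icc (0:ℝ) 1)

/-- The comonotone copula: the law of `(U,U)` for `U` uniform on `[0,1]`. -/
noncomputable def Mcop : Measure (ℝ × ℝ) := unif.map (fun u => (u, u))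

/-- The countermonotone copula: the law of `(U,1-U)` for `U` uniform on `[0,1]`. -/
noncomputable def Wcop : Measure (ℝ × ℝ) := unif.map (fun u => (u, 1 - u))

/-- Optimal transport cost between measures on `[0,1]²` with cost
`c(u,v) = |u₁-v₁| + |u₂-v₂|` (Wasserstein-1 w.r.t. the `L¹`-metric). -/
noncomputable def transportCost (μ ν : Measure (ℝ × ℝ)) : ℝ≥0∞ :=
  ⨅ (π : Measure ((ℝ × ℝ) × (ℝ × ℝ)))
    (_ : π.map Prod.fst = μ) (_ : π.map Prod.snd = ν),
    ∫⁻ q, ENNReal.ofReal (|q.1.1 - q.2.1| + |q.1.2 - q.2.2|) ∂π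

/-- A (bivariate) copula: a probability measure on `[0,1]²` with uniform marginals. -/
def IsCopula (C : Measure (ℝ × ℝ)) : Prop :=
  IsProbabilityMeasure C ∧ C.map Prod.fst = unif ∧ C.map Prod.snd = unif



instance unif_prob : IsProbabilityMeasure unif := by
  constructor
  simp [unif, Real.volume_Icc]

lemma integral_unif (f : ℝ → ℝ) : ∫ x, f x ∂unif = ∫ x in (0:ℝ)..1, f x := by
  rw [unif, MeasureTheory.integral_Icc_eq_integral_Ioc,
    intervalIntegral.integral_of_le zero_le_one]

lemma abs_half : ∫ x in (0:ℝ)..1, |x - 1/2| = 1/4 := by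
  have h1 : ∫ x in (0:ℝ)..(1/2), |x - 1/2| = 1/8 := by
    rw [intervalIntegral.integral_congr (g := fun x => 1/2 - x)
      (by intro x hx; rw [Set.uIcc_of_le (by norm_num)] at hx
          simp [abs_of_nonpos, hx.2, sub_nonpos]
          rw [abs_of_nonpos (by linarith [hx.2])]; ring)]
    rw [intervalIntegral.integral_sub intervalIntegrable_const
      (intervalIntegral.intervalIntegrable_id)]
    simp [integral_id]
    norm_num
  have h2 : ∫ x in (1/2:ℝ)..1, |x - 1/2| = 1/8 := by
    rw [intervalIntegral.integral_congr (g := fun x => x - 1/2)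
      (by intro x hx; rw [Set.uIcc_of_le (by norm_num)] at hx
          exact abs_of_nonneg (by linarith [hx.1]))]
    rw [intervalIntegral.integral_sub intervalIntegral.intervalIntegrable_id
      intervalIntegrable_const]
    simp [integral_id]
    norm_num
  rw [← intervalIntegral.integral_add_adjacent_intervals (b := (1/2:ℝ))
    ((by fun_prop : Continuous fun x : ℝ => |x - 1/2|).intervalIntegrable _ _)
    ((by fun_prop : Continuous fun x : ℝ => |x - 1/2|).intervalIntegrable _ _),
    h1, h2]
  norm_num





lemma meas_diag : Measurable (fun u : ℝ => (u, u)) := measurable_id.prodMk measurable_id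
lemma meas_anti : Measurable (fun u : ℝ => (u, 1 - u)) :=
  measurable_id.prodMk (measurable_const.sub measurable_id)

lemma unif_map_one_sub : unif.map (fun x => 1 - x) = unif := by
  have hm : Measurable (fun x : ℝ => 1 - x) := measurable_const.sub measurable_id
  have hmp : MeasurePreserving (fun x : ℝ => 1 - x) volume volume :=
    Measure.measurePreserving_sub_left volume 1
  ext s hs
  rw [Measure.map_apply hm hs, unif, Measure.restrict_apply (hm hs),
    Measure.restrict_apply hs]
  have : (fun x : ℝ => 1 - x) ⁻¹' s ∩ Icc 0 1 = (fun x : ℝ => 1 - x) ⁻¹' (s ∩ Icc 0 1) := by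
    ext x; simp only [Set.mem_inter_iff, Set.mem_preimage, Set.mem_Icc]
    constructor <;> rintro ⟨h1, h2, h3⟩ <;> exact ⟨h1, by linarith, by linarith⟩
  rw [this, ← hmp.measure_preimage ((hs.inter measurableSet_Icc).nullMeasurableSet)]

lemma Mcop_fst : Mcop.map Prod.fst = unif := by
  rw [Mcop, Measure.map_map measurable_fst meas_diag]; simp [Function.comp_def]
lemma Mcop_snd : Mcop.map Prod.snd = unif := by
  rw [Mcop, Measure.map_map measurable_snd meas_diag]; simp [Function.comp_def]
lemma Wcop_fst : Wcop.map Prod.fst = unif := by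
  rw [Wcop, Measure.map_map measurable_fst meas_anti]; simp [Function.comp_def]
lemma Wcop_snd : Wcop.map Prod.snd = unif := by
  rw [Wcop, Measure.map_map measurable_snd meas_anti]
  exact unif_map_one_sub

lemma Mcop_copula : IsCopula Mcop :=
  ⟨by rw [Mcop]; exact Measure.isProbabilityMeasure_map meas_diag.aemeasurable, Mcop_fst, Mcop_snd⟩
lemma Wcop_copula : IsCopula Wcop :=
  ⟨by rw [Wcop]; exact Measure.isProbabilityMeasure_map meas_anti.aemeasurable, Wcop_fst, Wcop_snd⟩

lemma unif_compl : unif ((Icc (0:ℝ) 1)ᶜ) = 0 := by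
  rw [unif, Measure.restrict_apply (measurableSet_Icc.compl)]
  simp

lemma copula_ae {C : Measure (ℝ × ℝ)} (hC : IsCopula C) :
    ∀ᵐ u ∂C, u.1 ∈ Icc (0:ℝ) 1 ∧ u.2 ∈ Icc (0:ℝ) 1 := by
  have h1 : C (Prod.fst ⁻¹' (Icc (0:ℝ) 1)ᶜ) = 0 := by
    rw [← Measure.map_apply measurable_fst measurableSet_Icc.compl, hC.2.1]
    exact unif_compl
  have h2 : C (Prod.snd ⁻¹' (Icc (0:ℝ) 1)ᶜ) = 0 := by
    rw [← Measure.map_apply measurable_snd measurableSet_Icc.compl, hC.2.2]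
    exact unif_compl
  have hz : C ({u : ℝ × ℝ | ¬ (u.1 ∈ Icc (0:ℝ) 1 ∧ u.2 ∈ Icc (0:ℝ) 1)}) = 0 := by
    refine measure_mono_null ?_ (measure_union_null h1 h2)
    intro u hu
    simp only [Set.mem_setOf_eq, Set.mem_union, Set.mem_preimage, Set.mem_compl_iff] at *
    tauto
  exact hz

lemma copula_integrable {C : Measure (ℝ × ℝ)} (hC : IsCopula C) {f : ℝ × ℝ → ℝ} {B : ℝ}
    (hf : Measurable f) (hB : ∀ u : ℝ × ℝ, u.1 ∈ Icc (0:ℝ) 1 → u.2 ∈ Icc (0:ℝ) 1 → |f u| ≤ B) :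
    Integrable f C := by
  have : IsProbabilityMeasure C := hC.1
  refine Integrable.mono' (integrable_const B) hf.aestronglyMeasurable ?_
  filter_upwards [copula_ae hC] with u hu
  exact hB u hu.1 hu.2

lemma copula_integral_fst {C : Measure (ℝ × ℝ)} (hC : IsCopula C) (g : ℝ → ℝ)
    (hg : Measurable g) : ∫ u, g u.1 ∂C = ∫ x, g x ∂unif := by
  rw [← hC.2.1, integral_map measurable_fst.aemeasurable hg.aestronglyMeasurable]

lemma copula_integral_snd {C : Measure (ℝ × ℝ)} (hC : IsCopula C) (g : ℝ → ℝ)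
    (hg : Measurable g) : ∫ u, g u.2 ∂C = ∫ x, g x ∂unif := by
  rw [← hC.2.2, integral_map measurable_snd.aemeasurable hg.aestronglyMeasurable]

lemma integral_id_unif : ∫ x, x ∂unif = 1/2 := by
  rw [integral_unif, integral_id]
  norm_num

lemma meas_max : Measurable (fun u : ℝ × ℝ => max u.1 u.2) :=
  measurable_fst.max measurable_snd

lemma integral_max_M : ∫ u, max u.1 u.2 ∂Mcop = 1/2 := by
  rw [Mcop, integral_map meas_diag.aemeasurable meas_max.aestronglyMeasurable]
  simp only [max_self]
  exact integral_id_unif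

lemma integral_abs_unif : ∫ x, |x - 1/2| ∂unif = 1/4 := by
  rw [integral_unif]; exact abs_half

lemma max_one_sub (x : ℝ) : max x (1 - x) = |x - 1/2| + 1/2 := by
  rcases le_total x (1/2) with h | h
  · rw [abs_of_nonpos (by linarith), max_eq_right (by linarith)]; ring
  · rw [abs_of_nonneg (by linarith), max_eq_left (by linarith)]; ring

lemma integral_max_W : ∫ u, max u.1 u.2 ∂Wcop = 3/4 := by
  rw [Wcop, integral_map meas_anti.aemeasurable meas_max.aestronglyMeasurable]
  simp only [max_one_sub]
  rw [integral_add ?_ (integrable_const _), integral_abs_unif, integral_const]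
  · simp; norm_num
  · rw [unif]
    exact ((by fun_prop : Continuous fun x : ℝ => |x - 1/2|)).integrableOn_Icc

lemma cost_W_lintegral :
    ∫⁻ x, ENNReal.ofReal (|x - x| + |x - (1 - x)|) ∂unif = ENNReal.ofReal (1/2) := by
  have habs : ∀ x : ℝ, |x - x| + |x - (1-x)| = 2 * |x - 1/2| := by
    intro x
    rw [sub_self, abs_zero, zero_add]
    rw [show x - (1-x) = 2*(x - 1/2) by ring, abs_mul]
    norm_num
  simp only [habs]
  rw [← ofReal_integral_eq_lintegral_ofReal]
  · rw [integral_const_mul, integral_abs_unif]; norm_num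
  · rw [unif]; exact ((by fun_prop : Continuous fun x : ℝ => 2 * |x - 1/2|)).integrableOn_Icc
  · filter_upwards with x; positivity

lemma meas_absdiff : Measurable (fun u : ℝ × ℝ => |u.1 - u.2|) :=
  (measurable_fst.sub measurable_snd).abs

/-- Key identity: for copulas, `∫ max = 1/2 + (∫ |u₁-u₂|)/2`. -/
lemma copula_integral_max {C : Measure (ℝ × ℝ)} (hC : IsCopula C) :
    ∫ u, max u.1 u.2 ∂C = 1/2 + (∫ u, |u.1 - u.2| ∂C) / 2 := by
  have hmax : ∀ u : ℝ × ℝ, max u.1 u.2 = (u.1 + u.2 + |u.1 - u.2|) / 2 := by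
    intro u; rcases le_total u.1 u.2 with h | h
    · rw [max_eq_right h, abs_of_nonpos (by linarith)]; ring
    · rw [max_eq_left h, abs_of_nonneg (by linarith)]; ring
  have i1 : Integrable (fun u : ℝ × ℝ => u.1) C :=
    copula_integrable hC measurable_fst (fun u h1 h2 => by
      rw [abs_le]; exact ⟨by linarith [h1.1], h1.2⟩)
  have i2 : Integrable (fun u : ℝ × ℝ => u.2) C :=
    copula_integrable hC measurable_snd (fun u h1 h2 => by
      rw [abs_le]; exact ⟨by linarith [h2.1], h2.2⟩)
  have i3 : Integrable (fun u : ℝ × ℝ => |u.1 - u.2|) C :=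
    copula_integrable hC (B := 1) meas_absdiff (fun u h1 h2 => by
      rw [abs_abs, abs_le]
      constructor <;> [linarith [h1.1, h2.2]; linarith [h1.2, h2.1]])
  simp only [hmax]
  have e1 : ∫ u : ℝ × ℝ, (u.1 + u.2 + |u.1 - u.2|) ∂C
      = (∫ u : ℝ × ℝ, u.1 ∂C) + (∫ u : ℝ × ℝ, u.2 ∂C) + ∫ u : ℝ × ℝ, |u.1 - u.2| ∂C := by
    rw [integral_add (show Integrable (fun u : ℝ × ℝ => u.1 + u.2) C from i1.add i2) i3,
      integral_add i1 i2]
  rw [integral_div, e1, copula_integral_fst hC (fun x => x) measurable_id,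
    copula_integral_snd hC (fun x => x) measurable_id, integral_id_unif]
  ring

/-- Transport-Lipschitz bound: `∫⁻ |u₁-u₂| dC ≤ d(M,C)`. -/
lemma lintegral_absdiff_le {C : Measure (ℝ × ℝ)}
    (hC : IsCopula C) :
    ∫⁻ u, ENNReal.ofReal |u.1 - u.2| ∂C ≤ transportCost Mcop C := by
  rw [transportCost]
  refine le_iInf fun π => le_iInf fun hfst => le_iInf fun hsnd => ?_
  have hm : Measurable (fun u : ℝ × ℝ => ENNReal.ofReal |u.1 - u.2|) :=
    meas_absdiff.ennreal_ofReal
  calc ∫⁻ u, ENNReal.ofReal |u.1 - u.2| ∂C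
      = ∫⁻ q, ENNReal.ofReal |q.2.1 - q.2.2| ∂π := by
        rw [← hsnd, lintegral_map hm measurable_snd]
    _ ≤ ∫⁻ q, (ENNReal.ofReal |q.1.1 - q.1.2| +
          ENNReal.ofReal (|q.1.1 - q.2.1| + |q.1.2 - q.2.2|)) ∂π := by
        refine lintegral_mono fun q => ?_
        rw [← ENNReal.ofReal_add (abs_nonneg _) (by positivity)]
        refine ENNReal.ofReal_le_ofReal ?_
        have : |q.2.1 - q.2.2| ≤ |q.1.1 - q.1.2| + |q.1.1 - q.2.1| + |q.1.2 - q.2.2| := by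
          have := abs_sub_abs_le_abs_sub (q.2.1 - q.2.2) (q.1.1 - q.1.2)
          have h2 : |q.2.1 - q.2.2 - (q.1.1 - q.1.2)| ≤ |q.1.1 - q.2.1| + |q.1.2 - q.2.2| := by
            rw [show q.2.1 - q.2.2 - (q.1.1 - q.1.2) = -(q.1.1 - q.2.1) + (q.1.2 - q.2.2) by ring]
            exact (abs_add_le _ _).trans (by rw [abs_neg])
          linarith [abs_nonneg (q.1.1 - q.1.2)]
        linarith
    _ = ∫⁻ q, ENNReal.ofReal |q.1.1 - q.1.2| ∂π +
          ∫⁻ q, ENNReal.ofReal (|q.1.1 - q.2.1| + |q.1.2 - q.2.2|) ∂π := by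
        exact lintegral_add_left (show Measurable fun q : (ℝ×ℝ)×(ℝ×ℝ) => ENNReal.ofReal |q.1.1 - q.1.2| from hm.comp measurable_fst) _
    _ = ∫⁻ q, ENNReal.ofReal (|q.1.1 - q.2.1| + |q.1.2 - q.2.2|) ∂π := by
        have : ∫⁻ q, ENNReal.ofReal |(q.1 : ℝ × ℝ).1 - q.1.2| ∂π
            = ∫⁻ u, ENNReal.ofReal |u.1 - u.2| ∂Mcop := by
          rw [← hfst, lintegral_map hm measurable_fst]
        rw [this, Mcop, lintegral_map hm meas_diag]
        simp

lemma copula_absdiff_integrable {C : Measure (ℝ × ℝ)} (hC : IsCopula C) :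
    Integrable (fun u : ℝ × ℝ => |u.1 - u.2|) C :=
  copula_integrable hC (B := 1) meas_absdiff (fun u h1 h2 => by
    rw [abs_abs, abs_le]
    constructor <;> [linarith [h1.1, h2.2]; linarith [h1.2, h2.1]])

lemma bound_rho {C : Measure (ℝ × ℝ)} (hC : IsCopula C) {ρ : ℝ} (hρ : 0 ≤ ρ)
    (hcost : transportCost Mcop C ≤ ENNReal.ofReal ρ) :
    ∫ u, max u.1 u.2 ∂C ≤ (1 + ρ) / 2 := by
  have h1 : ∫ u, |u.1 - u.2| ∂C ≤ ρ := by
    have := (ofReal_integral_eq_lintegral_ofReal (copula_absdiff_integrable hC)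
      (Filter.Eventually.of_forall fun u => abs_nonneg _)) ▸
      ((lintegral_absdiff_le hC).trans hcost)
    exact (ENNReal.ofReal_le_ofReal_iff hρ).mp this
  rw [copula_integral_max hC]
  linarith

noncomputable def gdual : ℝ → ℝ := fun x => max (x - 1/2) 0 + 1/4

lemma gdual_meas : Measurable gdual :=
  ((measurable_id.sub measurable_const).max measurable_const).add measurable_const

lemma gdual_ge (x : ℝ) : 1/4 ≤ gdual x := by
  unfold gdual; linarith [le_max_right (x - 1/2) 0]

lemma gdual_ge' (x : ℝ) : x - 1/4 ≤ gdual x := by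
  unfold gdual; rcases le_total x (1/2) with h | h
  · linarith [le_max_right (x - 1/2) 0]
  · linarith [le_max_left (x - 1/2) 0]

lemma gdual_ineq (a b : ℝ) : max a b ≤ gdual a + gdual b := by
  have key : ∀ u v : ℝ, u ≤ gdual u + gdual v := fun u v => by
    linarith [gdual_ge v, gdual_ge' u]
  exact max_le (key a b) (by linarith [key b a])

lemma integral_gdual_unif : ∫ x, gdual x ∂unif = 3/8 := by
  have : ∀ x : ℝ, gdual x = (|x - 1/2| + (x - 1/2)) / 2 + 1/4 := by
    intro x; unfold gdual
    rcases le_total x (1/2) with h | h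
    · rw [max_eq_right (by linarith), abs_of_nonpos (by linarith)]; ring
    · rw [max_eq_left (by linarith), abs_of_nonneg (by linarith)]; ring
  simp only [this]
  have iabs : Integrable (fun x : ℝ => |x - 1/2|) unif := by
    rw [unif]; exact ((by fun_prop : Continuous fun x : ℝ => |x - 1/2|)).integrableOn_Icc
  have iid : Integrable (fun x : ℝ => x - 1/2) unif := by
    rw [unif]; exact ((by fun_prop : Continuous fun x : ℝ => x - 1/2)).integrableOn_Icc
  have iid' : Integrable (fun x : ℝ => x) unif := by
    rw [unif]; exact continuous_id.integrableOn_Icc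
  rw [integral_add (show Integrable (fun x : ℝ => (|x - 1/2| + (x - 1/2)) / 2) unif from
      (show Integrable (fun x : ℝ => |x - 1/2| + (x - 1/2)) unif from iabs.add iid).div_const 2)
    (integrable_const _),
    integral_div,
    integral_add iabs iid,
    integral_sub iid' (integrable_const _),
    integral_abs_unif, integral_id_unif, integral_const, integral_const]
  simp
  norm_num

lemma bound_34 {C : Measure (ℝ × ℝ)} (hC : IsCopula C) :
    ∫ u, max u.1 u.2 ∂C ≤ 3 / 4 := by
  have i1 : Integrable (fun u : ℝ × ℝ => gdual u.1) C :=
    copula_integrable hC (B := 3/4) (gdual_meas.comp measurable_fst) (fun u h1 h2 => by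
      unfold gdual
      rw [abs_of_nonneg (by positivity)]
      rcases le_total u.1 (1/2) with h | h
      · rw [max_eq_right (by linarith)]; norm_num
      · rw [max_eq_left (by linarith)]; linarith [h1.2])
  have i2 : Integrable (fun u : ℝ × ℝ => gdual u.2) C :=
    copula_integrable hC (B := 3/4) (gdual_meas.comp measurable_snd) (fun u h1 h2 => by
      unfold gdual
      rw [abs_of_nonneg (by positivity)]
      rcases le_total u.2 (1/2) with h | h
      · rw [max_eq_right (by linarith)]; norm_num
      · rw [max_eq_left (by linarith)]; linarith [h2.2])
  have imax : Integrable (fun u : ℝ × ℝ => max u.1 u.2) C :=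
    copula_integrable hC (B := 1) meas_max (fun u h1 h2 => by
      rw [abs_le]
      constructor
      · have := h1.1; have := h2.1
        rcases max_cases u.1 u.2 with ⟨h,_⟩|⟨h,_⟩ <;> rw [h] <;> linarith
      · rcases max_cases u.1 u.2 with ⟨h,_⟩|⟨h,_⟩ <;> rw [h] <;> [exact h1.2; exact h2.2])
  calc ∫ u, max u.1 u.2 ∂C ≤ ∫ u : ℝ × ℝ, (gdual u.1 + gdual u.2) ∂C :=
        integral_mono imax (i1.add i2) (fun u => gdual_ineq u.1 u.2)
    _ = 3/4 := by
        rw [integral_add i1 i2, copula_integral_fst hC gdual gdual_meas,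
          copula_integral_snd hC gdual gdual_meas, integral_gdual_unif]
        norm_num

lemma meas_pair1 : Measurable (fun u : ℝ => ((u, u), (u, u))) :=
  meas_diag.prodMk meas_diag
lemma meas_pair2 : Measurable (fun u : ℝ => ((u, u), (u, 1 - u))) :=
  meas_diag.prodMk meas_anti

lemma cost_MW : transportCost Mcop Wcop ≤ ENNReal.ofReal (1/2) := by
  rw [transportCost]
  refine iInf_le_of_le (unif.map (fun u => ((u, u), (u, 1 - u)))) ?_
  refine iInf_le_of_le ?_ (iInf_le_of_le ?_ ?_)
  · rw [Measure.map_map measurable_fst meas_pair2, Mcop]; rfl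
  · rw [Measure.map_map measurable_snd meas_pair2, Wcop]; rfl
  · rw [lintegral_map (by fun_prop) meas_pair2]
    exact le_of_eq cost_W_lintegral

noncomputable def Cmix (ρ : ℝ) : Measure (ℝ × ℝ) :=
  ENNReal.ofReal (1 - 2*ρ) • Mcop + ENNReal.ofReal (2*ρ) • Wcop

lemma ofReal_mix {ρ : ℝ} (h0 : 0 ≤ ρ) (h2 : ρ ≤ 1/2) :
    ENNReal.ofReal (1 - 2*ρ) + ENNReal.ofReal (2*ρ) = 1 := by
  rw [← ENNReal.ofReal_add (by linarith) (by linarith)]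
  norm_num

lemma Cmix_copula {ρ : ℝ} (h0 : 0 ≤ ρ) (h2 : ρ ≤ 1/2) : IsCopula (Cmix ρ) := by
  refine ⟨⟨?_⟩, ?_, ?_⟩
  · have : IsProbabilityMeasure Mcop := Mcop_copula.1
    have : IsProbabilityMeasure Wcop := Wcop_copula.1
    simp only [Cmix, Measure.coe_add, Measure.coe_smul, Pi.add_apply, Pi.smul_apply,
      smul_eq_mul, measure_univ, mul_one]
    exact ofReal_mix h0 h2
  · rw [Cmix, Measure.map_add _ _ measurable_fst, Measure.map_smul, Measure.map_smul,
      Mcop_fst, Wcop_fst, ← add_smul, ofReal_mix h0 h2, one_smul]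
  · rw [Cmix, Measure.map_add _ _ measurable_snd, Measure.map_smul, Measure.map_smul,
      Mcop_snd, Wcop_snd, ← add_smul, ofReal_mix h0 h2, one_smul]

lemma cost_Cmix {ρ : ℝ} (h0 : 0 ≤ ρ) (h2 : ρ ≤ 1/2) :
    transportCost Mcop (Cmix ρ) ≤ ENNReal.ofReal ρ := by
  set π : Measure ((ℝ × ℝ) × (ℝ × ℝ)) :=
    ENNReal.ofReal (1 - 2*ρ) • unif.map (fun u => ((u, u), (u, u))) +
    ENNReal.ofReal (2*ρ) • unif.map (fun u => ((u, u), (u, 1 - u))) with hπ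
  rw [transportCost]
  refine iInf_le_of_le π ?_
  refine iInf_le_of_le ?_ (iInf_le_of_le ?_ ?_)
  · rw [hπ, Measure.map_add _ _ measurable_fst, Measure.map_smul, Measure.map_smul,
      Measure.map_map measurable_fst meas_pair1, Measure.map_map measurable_fst meas_pair2]
    have e1 : (Prod.fst ∘ fun u : ℝ => ((u, u), (u, u))) = fun u => (u, u) := rfl
    have e2 : (Prod.fst ∘ fun u : ℝ => ((u, u), (u, 1 - u))) = fun u => (u, u) := rfl
    rw [e1, e2, ← Mcop, ← add_smul, ofReal_mix h0 h2, one_smul]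
  · rw [hπ, Measure.map_add _ _ measurable_snd, Measure.map_smul, Measure.map_smul,
      Measure.map_map measurable_snd meas_pair1, Measure.map_map measurable_snd meas_pair2]
    rfl
  · rw [hπ, lintegral_add_measure, lintegral_smul_measure, lintegral_smul_measure,
      lintegral_map (by fun_prop) meas_pair1, lintegral_map (by fun_prop) meas_pair2]
    simp only [sub_self, abs_zero, add_zero, zero_add, ENNReal.ofReal_zero, lintegral_zero,
      mul_zero]
    have hW : ∫⁻ a : ℝ, ENNReal.ofReal |a - (1 - a)| ∂unif = ENNReal.ofReal (1/2) := by
      simpa using cost_W_lintegral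
    rw [hW]; simp only [smul_eq_mul, mul_zero, zero_add]; rw [← ENNReal.ofReal_mul (by linarith)]
    exact ENNReal.ofReal_le_ofReal (by linarith)

lemma integral_max_Cmix {ρ : ℝ} (h0 : 0 ≤ ρ) (h2 : ρ ≤ 1/2) :
    ∫ u, max u.1 u.2 ∂(Cmix ρ) = (1 + ρ) / 2 := by
  have iM : Integrable (fun u : ℝ × ℝ => max u.1 u.2) Mcop :=
    copula_integrable Mcop_copula (B := 1) meas_max (fun u h1 h2 => by
      rw [abs_le]; constructor
      · rcases max_cases u.1 u.2 with ⟨h,_⟩|⟨h,_⟩ <;> rw [h] <;> linarith [h1.1, h2.1]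
      · rcases max_cases u.1 u.2 with ⟨h,_⟩|⟨h,_⟩ <;> rw [h] <;> [exact h1.2; exact h2.2])
  have iW : Integrable (fun u : ℝ × ℝ => max u.1 u.2) Wcop :=
    copula_integrable Wcop_copula (B := 1) meas_max (fun u h1 h2 => by
      rw [abs_le]; constructor
      · rcases max_cases u.1 u.2 with ⟨h,_⟩|⟨h,_⟩ <;> rw [h] <;> linarith [h1.1, h2.1]
      · rcases max_cases u.1 u.2 with ⟨h,_⟩|⟨h,_⟩ <;> rw [h] <;> [exact h1.2; exact h2.2])
  rw [Cmix, integral_add_measure (iM.smul_measure ENNReal.ofReal_ne_top)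
      (iW.smul_measure ENNReal.ofReal_ne_top),
    integral_smul_measure, integral_smul_measure, integral_max_M, integral_max_W,
    ENNReal.toReal_ofReal (by linarith), ENNReal.toReal_ofReal (by linarith)]
  simp only [smul_eq_mul]
  ring

/-- For `ρ ∈ [0,1/2]`, the maximum of `∫ max(u₁,u₂) dC` over copulas `C`
with `d_c(M,C) ≤ ρ` equals `(1+ρ)/2`; for `ρ > 1/2` it equals `3/4`. -/
theorem max_expected_max_over_wasserstein_ball (ρ : ℝ) :
    (ρ ∈ Set.Icc (0:ℝ) (1/2) →
      IsGreatest {r : ℝ | ∃ C : Measure (ℝ × ℝ), IsCopula C ∧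
        transportCost Mcop C ≤ ENNReal.ofReal ρ ∧
        r = ∫ u, max u.1 u.2 ∂C} ((1 + ρ) / 2)) ∧
    (1/2 < ρ →
      IsGreatest {r : ℝ | ∃ C : Measure (ℝ × ℝ), IsCopula C ∧
        transportCost Mcop C ≤ ENNReal.ofReal ρ ∧
        r = ∫ u, max u.1 u.2 ∂C} (3 / 4)) := by
  constructor
  · rintro ⟨h0, h2⟩
    constructor
    · exact ⟨Cmix ρ, Cmix_copula h0 h2, cost_Cmix h0 h2, (integral_max_Cmix h0 h2).symm⟩
    · rintro r ⟨C, hC, hcost, rfl⟩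
      exact bound_rho hC h0 hcost
  · intro hρ
    constructor
    · exact ⟨Wcop, Wcop_copula, cost_MW.trans (ENNReal.ofReal_le_ofReal hρ.le),
        integral_max_W.symm⟩
    · rintro r ⟨C, hC, _, rfl⟩
      exact bound_34 hC
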